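/- Let u(ρ) = umax(ρmax - ρ)/ρmax be the linear Greenshields velocity on [0, ρmax] with umax, ρmax > 0, and let z > 0 be fixed. Then the function ρ ↦ ρ · 2zu(ρ)/(z + u(ρ)) is strictly concave on [0, ρmax]. -/

import Mathlib

set_option maxHeartbeats 1000000 in
theorem stmt_3 (umax ρmax z : ℝ) (humax : 0 < umax) (hρmax : 0 < ρmax)
    (hz : 0 < z) (u : ℝ → ℝ)
    (hu : ∀ ρ, u ρ = umax * (ρmax - ρ) / ρmax) :
    StrictConcaveOn ℝ (Set.Icc (0:ℝ) ρmax)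
      (fun ρ => ρ * (2 * z * u ρ / (z + u ρ))) := by
  set k : ℝ := umax / ρmax with hk
  have hk0 : 0 < k := div_pos humax hρmax
  have hrw : ∀ t : ℝ, umax * (ρmax - t) / ρmax = umax - k * t := by
    intro t; rw [hk]; field_simp
  constructor
  · exact convex_Icc 0 ρmax
  · intro x hx y hy hxy a b ha hb hab
    simp only [smul_eq_mul, hu, hrw]
    obtain ⟨hx0, hx1⟩ := hx
    obtain ⟨hy0, hy1⟩ := hy
    have hkr : k * ρmax = umax := by rw [hk]; field_simp
    have hux : 0 ≤ umax - k * x := by nlinarith [mul_le_mul_of_nonneg_left hx1 hk0.le]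
    have huy : 0 ≤ umax - k * y := by nlinarith [mul_le_mul_of_nonneg_left hy1 hk0.le]
    have hw1 : a * x + b * y ≤ ρmax := by
      nlinarith [mul_le_mul_of_nonneg_left hx1 ha.le, mul_le_mul_of_nonneg_left hy1 hb.le]
    have huw : 0 ≤ umax - k * (a * x + b * y) := by
      nlinarith [mul_le_mul_of_nonneg_left hw1 hk0.le]
    have hDx : 0 < z + (umax - k * x) := by linarith
    have hDy : 0 < z + (umax - k * y) := by linarith
    have hDw : 0 < z + (umax - k * (a * x + b * y)) := by linarith
    have hxy' : x - y ≠ 0 := sub_ne_zero.mpr hxy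
    have hsq : 0 < (x - y)^2 := lt_of_le_of_ne (sq_nonneg _) (Ne.symm (pow_ne_zero 2 hxy'))
    rw [← sub_pos]
    have key : (a * x + b * y) * (2 * z * (umax - k * (a * x + b * y)) / (z + (umax - k * (a * x + b * y))))
        - (a * (x * (2 * z * (umax - k * x) / (z + (umax - k * x)))) +
          b * (y * (2 * z * (umax - k * y) / (z + (umax - k * y)))))
        = 2 * z^2 * (z + umax) * k * a * b * (x - y)^2 /
          ((z + (umax - k * x)) * (z + (umax - k * y)) * (z + (umax - k * (a * x + b * y)))) := by
      have hb1 : b = 1 - a := by linarith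
      subst hb1
      generalize hd1 : z + (umax - k * x) = d1 at *
      generalize hd2 : z + (umax - k * y) = d2 at *
      generalize hd3 : z + (umax - k * (a * x + (1 - a) * y)) = d3 at *
      field_simp [hDx.ne', hDy.ne', hDw.ne']
      rw [← hd1, ← hd2, ← hd3]
      ring
    rw [key]
    positivity
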